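/- arXiv:2011.04603 — 4 statements merged into one kernel-verified Lean document; each statement's English description precedes it below -/
import Mathlib

section
/- Let X be a topological space, A ⊆ X a finite subset, and let a_1, …, a_m ∈ A be points lying in pairwise distinct path components of X such that every point of A lies in the same path component as some a_i. Then for every group G there is a bijection between the set of functors Π(X,A) → BG and the product (∏_{i=1}^m Hom(π₁(X,a_i), G)) × G^{A ∖ {a_1,…,a_m}}, where π₁(X,a_i) is the fundamental group of X at a_i and the last factor is the set of functions from A ∖ {a_1,…,a_m} to G. -/
open CategoryTheory

/-- The fundamental groupoid of `X` with basepoints in `A`: the full subcategory of the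
fundamental groupoid of `X` on the points of `A`. -/
abbrev RestrictedFundamentalGroupoid (X : Type*) [TopologicalSpace X] (A : Set X) :=
  ObjectProperty.FullSubcategory (fun x : FundamentalGroupoid X => x.as ∈ A)

noncomputable instance RestrictedFundamentalGroupoid.groupoid
    (X : Type*) [TopologicalSpace X] (A : Set X) :
    Groupoid (RestrictedFundamentalGroupoid X A) where
  inv {x y} f := ObjectProperty.homMk (Groupoid.inv (X := x.obj) (Y := y.obj) f.hom)
  inv_comp {x y} f := by ext; exact Groupoid.inv_comp (X := x.obj) (Y := y.obj) f.hom
  comp_inv {x y} f := by ext; exact Groupoid.comp_inv (X := x.obj) (Y := y.obj) f.hom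

namespace RVPD

attribute [local instance] Path.Homotopic.setoid

noncomputable section

variable {X : Type*} [TopologicalSpace X] {A : Set X} {m : ℕ} {a : Fin m → X}

variable (ha : ∀ i, a i ∈ A)
  (hdist : ∀ i j : Fin m, i ≠ j → ¬ Joined (a i) (a j))
  (hcover : ∀ x ∈ A, ∃ i : Fin m, Joined (a i) x)

def idx (x : X) (hx : x ∈ A) : Fin m := (hcover x hx).choose

lemma joined_idx (x : X) (hx : x ∈ A) : Joined (a (idx hcover x hx)) x :=
  (hcover x hx).choose_spec

include hdist in
lemma idx_spec {x : X} {hx : x ∈ A} {i : Fin m} (h : Joined (a i) x) :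
    idx hcover x hx = i := by
  by_contra hne
  exact hdist _ _ hne ((joined_idx hcover x hx).trans h.symm)

include hdist in
lemma a_idx_eq {x : X} {hx : x ∈ A} (h : x ∈ Set.range a) :
    a (idx hcover x hx) = x := by
  obtain ⟨j, rfl⟩ := h
  rw [idx_spec hdist hcover (Joined.refl _)]

abbrev obj (x : X) (hx : x ∈ A) : RestrictedFundamentalGroupoid X A := ⟨⟨x⟩, hx⟩

lemma obj_eq {u v : X} (h : u = v) (hu : u ∈ A) (hv : v ∈ A) :
    obj u hu = obj v hv := by subst h; rfl

lemma joined_of_hom {u v : X} {hu : u ∈ A} {hv : v ∈ A} (f : obj u hu ⟶ obj v hv) :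
    Joined u v := by
  have f' : Path.Homotopic.Quotient u v := f.hom
  exact ⟨f'.out⟩

include hdist in
lemma idx_hom_eq {u v : X} {hu : u ∈ A} {hv : v ∈ A} (f : obj u hu ⟶ obj v hv) :
    idx hcover v hv = idx hcover u hu :=
  idx_spec hdist hcover ((joined_idx hcover u hu).trans (joined_of_hom f))

open Classical in
def p (x : X) (hx : x ∈ A) : obj (a (idx hcover x hx)) (ha _) ⟶ obj x hx :=
  if h : x ∈ Set.range a then eqToHom (obj_eq (a_idx_eq hdist hcover h) _ _)
  else ObjectProperty.homMk (show Path.Homotopic.Quotient _ _ from ⟦(joined_idx hcover x hx).somePath⟧)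

lemma p_range {x : X} {hx : x ∈ A} (h : x ∈ Set.range a) :
    p ha hdist hcover x hx = eqToHom (obj_eq (a_idx_eq hdist hcover h) _ _) :=
  dif_pos h

/-- The loop at the chosen basepoint obtained by conjugating `f` with the chosen paths. -/
def loopHom {u v : X} {hu : u ∈ A} {hv : v ∈ A} (f : obj u hu ⟶ obj v hv) :
    obj (a (idx hcover u hu)) (ha _) ⟶ obj (a (idx hcover u hu)) (ha _) :=
  p ha hdist hcover u hu ≫ f ≫ Groupoid.inv (p ha hdist hcover v hv) ≫
    eqToHom (obj_eq (congrArg a (idx_hom_eq hdist hcover f)) _ _)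

def loopAut {u v : X} {hu : u ∈ A} {hv : v ∈ A} (f : obj u hu ⟶ obj v hv) :
    Aut (obj (a (idx hcover u hu)) (ha _)) :=
  ⟨loopHom ha hdist hcover f, Groupoid.inv (loopHom ha hdist hcover f),
    Groupoid.comp_inv _, Groupoid.inv_comp _⟩

/-- Transfer an automorphism in the restricted groupoid to the fundamental group. -/
def toFG (i : Fin m) : Aut (obj (a i) (ha i)) →* FundamentalGroup X (a i) :=
  (Aut.toEnd _).comp ((ObjectProperty.ι _).mapAut _)

def conjAut {i j : Fin m} (e : j = i) (β : Aut (obj (a j) (ha j))) :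
    Aut (obj (a i) (ha i)) := e ▸ β

lemma conjAut_hom {i j : Fin m} (e : j = i) (β : Aut (obj (a j) (ha j))) :
    (conjAut ha e β).hom =
      eqToHom (obj_eq (congrArg a e.symm) _ _) ≫ β.hom ≫
        eqToHom (obj_eq (congrArg a e) _ _) := by
  subst e; simp [conjAut]

variable {G : Type*} [Group G]

lemma phi_conjAut (φ : ∀ k, FundamentalGroup X (a k) →* G) {i j : Fin m} (e : j = i)
    (β : Aut (obj (a j) (ha j))) :
    φ i (toFG ha i (conjAut ha e β)) = φ j (toFG ha j β) := by
  subst e; rfl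


lemma loopAut_id (x : X) (hx : x ∈ A) :
    loopAut ha hdist hcover (𝟙 (obj x hx)) = 1 := by
  apply Iso.ext
  show loopHom ha hdist hcover (𝟙 (obj x hx)) = 𝟙 _
  simp [loopHom, Groupoid.inv_eq_inv]

lemma loopAut_comp {u v w : X} {hu : u ∈ A} {hv : v ∈ A} {hw : w ∈ A}
    (f : obj u hu ⟶ obj v hv) (g : obj v hv ⟶ obj w hw) :
    loopAut ha hdist hcover (f ≫ g) =
      conjAut ha (idx_hom_eq hdist hcover f) (loopAut ha hdist hcover g) *
        loopAut ha hdist hcover f := by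
  apply Iso.ext
  show loopHom ha hdist hcover (f ≫ g) = (loopAut ha hdist hcover f).hom ≫ _
  rw [conjAut_hom]
  simp [loopHom, loopAut, conjAut_hom, Groupoid.inv_eq_inv, eqToHom_trans]


variable (G) in
open Classical in
def gbar (g : ↥(A \ Set.range a) → G) (x : X) (hx : x ∈ A) : G :=
  if h : x ∈ Set.range a then 1 else g ⟨x, hx, h⟩

lemma gbar_range (g : ↥(A \ Set.range a) → G) {x : X} (hx : x ∈ A)
    (h : x ∈ Set.range a) : gbar G g x hx = 1 := dif_pos h

lemma gbar_not_range (g : ↥(A \ Set.range a) → G) {x : X} (hx : x ∈ A)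
    (h : x ∉ Set.range a) : gbar G g x hx = g ⟨x, hx, h⟩ := dif_neg h

/-- The functor associated to the data `(φ, g)`. -/
def mkF (φ : ∀ i, FundamentalGroup X (a i) →* G)
    (g : ↥(A \ Set.range a) → G) : RestrictedFundamentalGroupoid X A ⥤ SingleObj G where
  obj _ := SingleObj.star G
  map {x y} f :=
    gbar G g y.obj.as y.property *
      (φ (idx hcover x.obj.as x.property)
        (toFG ha _ (loopAut ha hdist hcover (hu := x.property) (hv := y.property) f))) *
      (gbar G g x.obj.as x.property)⁻¹
  map_id x := by
    obtain ⟨⟨u⟩, hu⟩ := x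
    show _ * _ * _ = (1 : G)
    rw [loopAut_id ha hdist hcover u hu]
    simp
    exact map_one _
  map_comp {x y z} f g' := by
    obtain ⟨⟨u⟩, hu⟩ := x
    obtain ⟨⟨v⟩, hv⟩ := y
    obtain ⟨⟨w⟩, hw⟩ := z
    dsimp only
    rw [SingleObj.comp_as_mul, loopAut_comp ha hdist hcover f g', map_mul, map_mul,
      phi_conjAut ha φ (idx_hom_eq hdist hcover f)]
    group


lemma eqToHom_single {x y : SingleObj G} (h : x = y) : eqToHom h = (1 : G) := by
  subst h; rfl

/-- The monoid homomorphism on the fundamental group induced by a functor to `SingleObj G`. -/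
def fwdHom (F : RestrictedFundamentalGroupoid X A ⥤ SingleObj G) (i : Fin m) :
    FundamentalGroup X (a i) →* G where
  toFun γ := F.map (X := obj (a i) (ha i)) (Y := obj (a i) (ha i)) (ObjectProperty.homMk γ)
  map_one' := F.map_id _
  map_mul' γ δ :=
    F.map_comp (X := obj (a i) (ha i)) (Y := obj (a i) (ha i)) (Z := obj (a i) (ha i))
      (ObjectProperty.homMk δ) (ObjectProperty.homMk γ)

/-- The data extracted from a functor to `SingleObj G`. -/
def fwd (F : RestrictedFundamentalGroupoid X A ⥤ SingleObj G) :
    (∀ i : Fin m, FundamentalGroup X (a i) →* G) × (↥(A \ Set.range a) → G) :=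
  ⟨fun i => fwdHom ha F i, fun x => F.map (p ha hdist hcover x.1 x.2.1)⟩

lemma map_groupoid_inv (F : RestrictedFundamentalGroupoid X A ⥤ SingleObj G)
    {c d : RestrictedFundamentalGroupoid X A} (f : c ⟶ d) :
    (F.map (Groupoid.inv f) : G) = (F.map f : G)⁻¹ := by
  apply eq_inv_of_mul_eq_one_left
  show F.map f ≫ F.map (Groupoid.inv f) = (1 : G)
  rw [← F.map_comp, Groupoid.comp_inv, F.map_id]
  rfl

lemma fwd_gbar (F : RestrictedFundamentalGroupoid X A ⥤ SingleObj G) (x : X) (hx : x ∈ A) :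
    gbar G (fwd ha hdist hcover F).2 x hx = F.map (p ha hdist hcover x hx) := by
  by_cases h : x ∈ Set.range a
  · rw [gbar_range _ _ h, p_range ha hdist hcover h, eqToHom_map, eqToHom_single]
  · rw [gbar_not_range _ _ h]
    rfl

lemma left_inv (F : RestrictedFundamentalGroupoid X A ⥤ SingleObj G) :
    mkF ha hdist hcover (fwd ha hdist hcover F).1 (fwd ha hdist hcover F).2 = F := by
  refine CategoryTheory.Functor.ext (fun x => Subsingleton.elim _ _) ?_
  intro x y f
  obtain ⟨⟨u⟩, hu⟩ := x
  obtain ⟨⟨v⟩, hv⟩ := y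
  rw [SingleObj.comp_as_mul, SingleObj.comp_as_mul, eqToHom_single]
  show gbar G (fwd ha hdist hcover F).2 v hv *
      F.map (X := obj (a (idx hcover u hu)) (ha _)) (loopHom ha hdist hcover f) *
      (gbar G (fwd ha hdist hcover F).2 u hu)⁻¹ = 1 * F.map f * 1
  rw [fwd_gbar, fwd_gbar]
  rw [show F.map (X := obj (a (idx hcover u hu)) (ha _)) (loopHom ha hdist hcover f) =
    F.map (p ha hdist hcover u hu ≫ f ≫ Groupoid.inv (p ha hdist hcover v hv) ≫
      eqToHom (obj_eq (congrArg a (idx_hom_eq hdist hcover f)) _ _)) from rfl]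
  rw [F.map_comp, F.map_comp, F.map_comp, eqToHom_map, eqToHom_single,
    SingleObj.comp_as_mul, SingleObj.comp_as_mul, SingleObj.comp_as_mul,
    map_groupoid_inv]
  group


lemma loopAut_hom {u v : X} {hu : u ∈ A} {hv : v ∈ A} (f : obj u hu ⟶ obj v hv) :
    (loopAut ha hdist hcover f).hom = loopHom ha hdist hcover f := rfl

lemma loopAut_basepoint (i : Fin m) (γ : FundamentalGroup X (a i)) :
    toFG ha i (conjAut ha (idx_spec hdist hcover (Joined.refl (a i)))
      (loopAut ha hdist hcover (hu := ha i) (hv := ha i) (ObjectProperty.homMk γ))) = γ := by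
  show (conjAut ha (idx_spec hdist hcover (Joined.refl (a i)))
      (loopAut ha hdist hcover (hu := ha i) (hv := ha i) (ObjectProperty.homMk γ))).hom.hom = γ
  rw [conjAut_hom, loopAut_hom, loopHom, p_range ha hdist hcover ⟨i, rfl⟩]
  simp [Groupoid.inv_eq_inv, eqToHom_trans]

lemma fwd_mkF_fst (φ : ∀ i, FundamentalGroup X (a i) →* G) (g : ↥(A \ Set.range a) → G) :
    (fwd ha hdist hcover (mkF ha hdist hcover φ g)).1 = φ := by
  funext i
  ext γ
  show gbar G g (a i) (ha i) *
      φ (idx hcover (a i) (ha i))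
        (toFG ha _ (loopAut ha hdist hcover (hu := ha i) (hv := ha i) (ObjectProperty.homMk γ))) *
      (gbar G g (a i) (ha i))⁻¹ = φ i γ
  rw [gbar_range _ _ ⟨i, rfl⟩,
    ← phi_conjAut ha φ (idx_spec hdist hcover (Joined.refl (a i))),
    loopAut_basepoint]
  group

lemma fwd_mkF_snd (φ : ∀ i, FundamentalGroup X (a i) →* G) (g : ↥(A \ Set.range a) → G) :
    (fwd ha hdist hcover (mkF ha hdist hcover φ g)).2 = g := by
  funext x
  obtain ⟨x, hx⟩ := x
  show gbar G g x hx.1 *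
      φ (idx hcover (a (idx hcover x hx.1)) (ha _))
        (toFG ha _ (loopAut ha hdist hcover (hu := ha _) (hv := hx.1)
          (p ha hdist hcover x hx.1))) *
      (gbar G g (a (idx hcover x hx.1)) (ha _))⁻¹ = g ⟨x, hx⟩
  have hl : loopAut ha hdist hcover (hu := ha _) (hv := hx.1)
      (p ha hdist hcover x hx.1) = 1 := by
    apply Iso.ext
    rw [loopAut_hom, loopHom, p_range ha hdist hcover ⟨idx hcover x hx.1, rfl⟩]
    show _ = 𝟙 _
    simp [Groupoid.inv_eq_inv, eqToHom_trans]
  rw [hl, map_one, map_one, gbar_range _ _ ⟨_, rfl⟩, gbar_not_range _ _ hx.2]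
  group

end

end RVPD


/-- If `A ⊆ X` is finite and `a₁, …, a_m ∈ A` lie in pairwise distinct path
components of `X`, with every point of `A` in the same path component as some `aᵢ`, then for every
group `G` the functors `Π(X,A) ⥤ BG` are in bijection with
`(∏ᵢ Hom(π₁(X,aᵢ), G)) × G^{A ∖ {a₁,…,a_m}}`. -/
theorem representation_variety_product_decomposition
    (X : Type*) [TopologicalSpace X] (A : Set X) (hA : A.Finite)
    (m : ℕ) (a : Fin m → X) (ha : ∀ i, a i ∈ A)
    (hdist : ∀ i j : Fin m, i ≠ j → ¬ Joined (a i) (a j))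
    (hcover : ∀ x ∈ A, ∃ i : Fin m, Joined (a i) x)
    (G : Type*) [Group G] :
    Nonempty ((RestrictedFundamentalGroupoid X A ⥤ SingleObj G) ≃
      ((∀ i : Fin m, FundamentalGroup X (a i) →* G) × (↥(A \ Set.range a) → G))) := by
  exact ⟨{ toFun := RVPD.fwd ha hdist hcover,
           invFun := fun φg => RVPD.mkF ha hdist hcover φg.1 φg.2,
           left_inv := fun F => RVPD.left_inv ha hdist hcover F,
           right_inv := fun φg => Prod.ext
             (RVPD.fwd_mkF_fst ha hdist hcover φg.1 φg.2)
             (RVPD.fwd_mkF_snd ha hdist hcover φg.1 φg.2) }⟩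
end

section
/- Let n ≥ 1 and let W be a compact Hausdorff topological space that is locally Euclidean of dimension n (a closed topological n-manifold). Let W' be a Hausdorff topological space, f : W → W' a continuous surjection, and p' ∈ W' a point such that the fiber f⁻¹(p') = {p₁, …, p_r} consists of exactly r ≥ 1 points and every point of W' ∖ {p'} has exactly one preimage under f. Then there exist an open neighborhood V of p' in W' and a homeomorphism from Cone(S^{n-1} ⊔ ⋯ ⊔ S^{n-1}) (the cone over the disjoint union of r copies of the unit sphere S^{n-1} ⊆ ℝ^n) onto V sending the vertex of the cone to p'. -/
open Topology


/-- The setoid on `B × [0,1)` collapsing `B × {0}` to a point. -/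
def ConeSetoid (B : Type*) : Setoid (B × {t : ℝ // t ∈ Set.Ico (0 : ℝ) 1}) where
  r p q := p = q ∨ ((p.2 : ℝ) = 0 ∧ (q.2 : ℝ) = 0)
  iseqv := by
    refine ⟨fun _ => Or.inl rfl, ?_, ?_⟩
    · rintro p q (rfl | ⟨h1, h2⟩)
      · exact Or.inl rfl
      · exact Or.inr ⟨h2, h1⟩
    · rintro p q r (rfl | ⟨h1, h2⟩) (rfl | ⟨h3, h4⟩) <;> tauto

/-- The topological cone over `B`: the quotient `(B × [0,1)) / (B × {0})`. -/
abbrev Cone (B : Type*) : Type _ := Quotient (ConeSetoid B)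

/-- Setoid for the closed cone over `B`, on `B × [0,1]`. -/
def ConeSetoidC (B : Type*) : Setoid (B × {t : ℝ // t ∈ Set.Icc (0 : ℝ) 1}) where
  r p q := p = q ∨ ((p.2 : ℝ) = 0 ∧ (q.2 : ℝ) = 0)
  iseqv := by
    refine ⟨fun _ => Or.inl rfl, ?_, ?_⟩
    · rintro p q (rfl | ⟨h1, h2⟩)
      · exact Or.inl rfl
      · exact Or.inr ⟨h2, h1⟩
    · rintro p q r (rfl | ⟨h1, h2⟩) (rfl | ⟨h3, h4⟩) <;> tauto

/-- The closed cone over `B`. -/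
abbrev ConeC (B : Type*) : Type _ := Quotient (ConeSetoidC B)

/-- The underlying inclusion `B × [0,1) → B × [0,1]`. -/
def coneIota (B : Type*) : B × {t : ℝ // t ∈ Set.Ico (0 : ℝ) 1} →
    B × {t : ℝ // t ∈ Set.Icc (0 : ℝ) 1} :=
  fun x => (x.1, ⟨x.2.1, x.2.2.1, x.2.2.2.le⟩)

lemma coneIota_injective (B : Type*) : Function.Injective (coneIota B) := by
  rintro ⟨b, t, ht⟩ ⟨b', t', ht'⟩ h
  simp only [coneIota, Prod.mk.injEq, Subtype.mk.injEq] at h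
  exact Prod.ext h.1 (Subtype.ext (congrArg (fun x : {t : ℝ // t ∈ Set.Icc (0 : ℝ) 1} => (x : ℝ)) h.2))

lemma continuous_coneIota (B : Type*) [TopologicalSpace B] : Continuous (coneIota B) :=
  continuous_fst.prodMk ((continuous_subtype_val.comp continuous_snd).subtype_mk _)

lemma isOpenMap_coneIota (B : Type*) [TopologicalSpace B] : IsOpenMap (coneIota B) := by
  have hsub : Set.Ico (0 : ℝ) 1 ⊆ Set.Icc (0 : ℝ) 1 := Set.Ico_subset_Icc_self
  have hemb : Topology.IsEmbedding (Set.inclusion hsub) := Topology.IsEmbedding.inclusion hsub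
  have hrange : IsOpen (Set.range (Set.inclusion hsub)) := by
    rw [Set.range_inclusion]
    have : {x : {t : ℝ // t ∈ Set.Icc (0:ℝ) 1} | (x : ℝ) ∈ Set.Ico (0:ℝ) 1}
        = Subtype.val ⁻¹' Set.Iio (1 : ℝ) := by
      ext x
      simp only [Set.mem_setOf_eq, Set.mem_Ico, Set.mem_preimage, Set.mem_Iio]
      exact ⟨fun h => h.2, fun h => ⟨x.2.1, h⟩⟩
    rw [this]
    exact isOpen_Iio.preimage continuous_subtype_val
  have hoe : Topology.IsOpenEmbedding (Set.inclusion hsub) := ⟨hemb, hrange⟩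
  exact IsOpenMap.id.prodMap hoe.isOpenMap

/-- The canonical map from the open cone to the closed cone. -/
def coneIncl (B : Type*) : Cone B → ConeC B :=
  Quotient.map' (coneIota B) (by
    rintro ⟨b, t⟩ ⟨b', t'⟩ (h | ⟨h1, h2⟩)
    · exact Or.inl (by rw [h])
    · exact Or.inr ⟨h1, h2⟩)

lemma coneIncl_mk (B : Type*) (x : B × {t : ℝ // t ∈ Set.Ico (0 : ℝ) 1}) :
    coneIncl B (Quotient.mk (ConeSetoid B) x) = Quotient.mk (ConeSetoidC B) (coneIota B x) := rfl

lemma coneIncl_injective (B : Type*) : Function.Injective (coneIncl B) := by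
  intro x y
  induction x using Quotient.ind with | _ a => ?_
  induction y using Quotient.ind with | _ b => ?_
  intro h
  apply Quotient.sound
  rcases Quotient.exact h with h' | ⟨h1, h2⟩
  · exact Or.inl (coneIota_injective B h')
  · exact Or.inr ⟨h1, h2⟩

lemma coneIncl_continuous (B : Type*) [TopologicalSpace B] : Continuous (coneIncl B) :=
  Continuous.quotient_map' (continuous_coneIota B) _

lemma coneIncl_isOpenMap (B : Type*) [TopologicalSpace B] : IsOpenMap (coneIncl B) := by
  have hq1 : IsQuotientMap (Quotient.mk (ConeSetoid B)) := isQuotientMap_quot_mk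
  have hq2 : IsQuotientMap (Quotient.mk (ConeSetoidC B)) := isQuotientMap_quot_mk
  intro s hs
  rw [← hq2.isOpen_preimage]
  have hs' : IsOpen (Quotient.mk (ConeSetoid B) ⁻¹' s) := hs.preimage hq1.continuous
  have key : Quotient.mk (ConeSetoidC B) ⁻¹' (coneIncl B '' s)
      = coneIota B '' (Quotient.mk (ConeSetoid B) ⁻¹' s) := by
    ext ⟨b, t, h0t, ht1⟩
    constructor
    · rintro ⟨y, hy, hey⟩
      obtain ⟨a, rfl⟩ := Quotient.exists_rep y
      rw [coneIncl_mk] at hey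
      rcases Quotient.exact hey with h' | ⟨h1, h2⟩
      · exact ⟨a, hy, h'⟩
      · refine ⟨(b, ⟨0, le_rfl, one_pos⟩), ?_, Prod.ext rfl (Subtype.ext h2.symm)⟩
        have he : Quotient.mk (ConeSetoid B) (b, ⟨0, le_rfl, one_pos⟩)
            = Quotient.mk (ConeSetoid B) a := Quotient.sound (Or.inr ⟨rfl, h1⟩)
        show Quotient.mk (ConeSetoid B) (b, ⟨0, le_rfl, one_pos⟩) ∈ s
        rw [he]; exact hy
    · rintro ⟨a, ha, hae⟩
      exact ⟨Quotient.mk (ConeSetoid B) a, ha, by rw [coneIncl_mk, hae]⟩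
  rw [key]
  exact isOpenMap_coneIota B _ hs'

lemma coneIncl_isEmbedding (B : Type*) [TopologicalSpace B] :
    Topology.IsEmbedding (coneIncl B) :=
  (Topology.IsOpenEmbedding.of_continuous_injective_isOpenMap (coneIncl_continuous B)
    (coneIncl_injective B) (coneIncl_isOpenMap B)).isEmbedding

/-- Let `W` be a closed topological `n`-manifold, `W'` a Hausdorff space and
`f : W → W'` a continuous surjection which is injective away from a point `p'` whose fiber
consists of exactly `r ≥ 1` points. Then `p'` has an open neighborhood `V` in `W'` homeomorphic to
the cone over the disjoint union of `r` copies of `S^{n-1}`, the vertex being sent to `p'`. -/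
theorem normalization_local_structure (n : ℕ) (hn : 1 ≤ n)
    (W : Type*) [TopologicalSpace W] [CompactSpace W] [T2Space W]
    (hW : ∀ x : W, ∃ (U : Set W) (V : Set (EuclideanSpace ℝ (Fin n))),
      IsOpen U ∧ x ∈ U ∧ IsOpen V ∧ Nonempty (↥U ≃ₜ ↥V))
    (W' : Type*) [TopologicalSpace W'] [T2Space W']
    (f : W → W') (hf : Continuous f) (hsurj : Function.Surjective f)
    (p' : W') (r : ℕ) (hr : 1 ≤ r) (p : Fin r → W) (hpinj : Function.Injective p)
    (hfiber : f ⁻¹' {p'} = Set.range p)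
    (hinj : ∀ w' : W', w' ≠ p' → ∃! w : W, f w = w') :
    ∃ V : Set W', IsOpen V ∧ p' ∈ V ∧
      ∃ φ : Cone (Σ _ : Fin r, ↥(Metric.sphere (0 : EuclideanSpace ℝ (Fin n)) 1)) ≃ₜ ↥V,
        ∀ b : Σ _ : Fin r, ↥(Metric.sphere (0 : EuclideanSpace ℝ (Fin n)) 1),
          ((φ (Quotient.mk (ConeSetoid _) (b, ⟨0, le_rfl, one_pos⟩)) : ↥V) : W') = p' := by
  classical
  haveI : Nonempty (Fin n) := ⟨⟨0, hn⟩⟩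
  haveI hnontriv : Nontrivial (EuclideanSpace ℝ (Fin n)) := inferInstance
  obtain ⟨s₀, hs₀⟩ : (Metric.sphere (0 : EuclideanSpace ℝ (Fin n)) 1).Nonempty :=
    NormedSpace.sphere_nonempty.2 zero_le_one
  have hpfib : ∀ i, f (p i) = p' := fun i => by
    have : p i ∈ f ⁻¹' {p'} := hfiber ▸ Set.mem_range_self i
    simpa using this
  -- pairwise disjoint open neighborhoods of the `p i`
  have sep : ∀ i j : Fin r, ∃ uvp : Set W × Set W, IsOpen uvp.1 ∧ IsOpen uvp.2 ∧
      p i ∈ uvp.1 ∧ p j ∈ uvp.2 ∧ (i ≠ j → Disjoint uvp.1 uvp.2) := by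
    intro i j
    rcases eq_or_ne i j with rfl | hij
    · exact ⟨(Set.univ, Set.univ), isOpen_univ, isOpen_univ, trivial, trivial,
        fun h => absurd rfl h⟩
    · obtain ⟨u, v, hu, hv, hiu, hjv, huv⟩ := t2_separation (hpinj.ne hij)
      exact ⟨(u, v), hu, hv, hiu, hjv, fun _ => huv⟩
  choose uvp hu hv hpu hpv hdisj using sep
  set O : Fin r → Set W := fun i => (⋂ j, (uvp i j).1) ∩ (⋂ j, (uvp j i).2) with hOdef
  have hOopen : ∀ i, IsOpen (O i) := fun i =>
    (isOpen_iInter_of_finite fun j => hu i j).inter (isOpen_iInter_of_finite fun j => hv j i)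
  have hpO : ∀ i, p i ∈ O i := fun i =>
    ⟨Set.mem_iInter.2 fun j => hpu i j, Set.mem_iInter.2 fun j => hpv j i⟩
  have hOdisj : ∀ i j, i ≠ j → Disjoint (O i) (O j) := fun i j hij =>
    (hdisj i j hij).mono
      (Set.inter_subset_left.trans (Set.iInter_subset _ j))
      (Set.inter_subset_right.trans (Set.iInter_subset _ i))
  -- charts
  choose U Vc hUopen hmemU hVopen hne using fun i => hW (p i)
  have χ : ∀ i, ↥(U i) ≃ₜ ↥(Vc i) := fun i => (hne i).some
  set c : Fin r → EuclideanSpace ℝ (Fin n) :=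
    fun i => ((χ i) ⟨p i, hmemU i⟩ : EuclideanSpace ℝ (Fin n)) with hcdef
  set Wset : Fin r → Set (EuclideanSpace ℝ (Fin n)) := fun i =>
    Subtype.val '' ((χ i) '' (Subtype.val ⁻¹' (O i))) with hWsetdef
  have hWopen : ∀ i, IsOpen (Wset i) := by
    intro i
    apply (hVopen i).isOpenMap_subtype_val
    apply (χ i).isOpenMap
    exact (hOopen i).preimage continuous_subtype_val
  have hcW : ∀ i, c i ∈ Wset i := fun i => ⟨(χ i) ⟨p i, hmemU i⟩, ⟨⟨p i, hmemU i⟩, hpO i, rfl⟩, rfl⟩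
  have hballex : ∀ i, ∃ e : ℝ, 0 < e ∧ Metric.closedBall (c i) e ⊆ Wset i := by
    intro i
    obtain ⟨δ, hδ, hsub⟩ := Metric.isOpen_iff.1 (hWopen i) (c i) (hcW i)
    exact ⟨δ / 2, by positivity, (Metric.closedBall_subset_ball (by linarith)).trans hsub⟩
  choose ε hε hεsub using hballex
  have hmemVc : ∀ i (x : EuclideanSpace ℝ (Fin n)),
      x ∈ Metric.closedBall (c i) (ε i) → x ∈ Vc i := by
    intro i x hx
    obtain ⟨y, -, rfl⟩ := hεsub i hx
    exact y.2
  set ψ : ∀ i, ↥(Vc i) → W := fun i y => ((χ i).symm y : W) with hψdef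
  have hψcongr : ∀ i (a b : ↥(Vc i)), (a : EuclideanSpace ℝ (Fin n)) = b → ψ i a = ψ i b :=
    fun i a b h => by rw [Subtype.ext h]
  have hψinj : ∀ i, Function.Injective (ψ i) :=
    fun i a b h => (χ i).symm.injective (Subtype.coe_injective h)
  have hψO : ∀ i (x : EuclideanSpace ℝ (Fin n)) (hx : x ∈ Metric.closedBall (c i) (ε i)),
      ψ i ⟨x, hmemVc i x hx⟩ ∈ O i := by
    intro i x hx
    obtain ⟨y, hy, hyx⟩ := hεsub i hx
    obtain ⟨z, hz, rfl⟩ := hy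
    have hxz : (⟨x, hmemVc i x hx⟩ : ↥(Vc i)) = (χ i) z := Subtype.ext hyx.symm
    rw [hψdef]
    simp only [hxz, Homeomorph.symm_apply_apply]
    exact hz
  have hψc : ∀ i (h : c i ∈ Vc i), ψ i ⟨c i, h⟩ = p i := by
    intro i h
    have hcc : (⟨c i, h⟩ : ↥(Vc i)) = (χ i) ⟨p i, hmemU i⟩ := Subtype.ext rfl
    rw [hψdef]
    simp only [hcc, Homeomorph.symm_apply_apply]
  have hsnorm : ∀ s : ↥(Metric.sphere (0 : EuclideanSpace ℝ (Fin n)) 1),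
      ‖(s : EuclideanSpace ℝ (Fin n))‖ = 1 := fun s => by
    simpa using mem_sphere_zero_iff_norm.1 s.2
  have hmemball : ∀ i (t : ℝ), 0 ≤ t → t ≤ 1 →
      ∀ s : ↥(Metric.sphere (0 : EuclideanSpace ℝ (Fin n)) 1),
      c i + (t * ε i) • (s : EuclideanSpace ℝ (Fin n)) ∈ Metric.closedBall (c i) (ε i) := by
    intro i t ht0 ht1 s
    rw [Metric.mem_closedBall, dist_eq_norm, add_sub_cancel_left, norm_smul,
      Real.norm_of_nonneg (mul_nonneg ht0 (hε i).le), hsnorm s, mul_one]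
    calc t * ε i ≤ 1 * ε i := mul_le_mul_of_nonneg_right ht1 (hε i).le
      _ = ε i := one_mul _
  have hmemballlt : ∀ i (t : ℝ), 0 ≤ t → t < 1 →
      ∀ s : ↥(Metric.sphere (0 : EuclideanSpace ℝ (Fin n)) 1),
      c i + (t * ε i) • (s : EuclideanSpace ℝ (Fin n)) ∈ Metric.ball (c i) (ε i) := by
    intro i t ht0 ht1 s
    rw [Metric.mem_ball, dist_eq_norm, add_sub_cancel_left, norm_smul,
      Real.norm_of_nonneg (mul_nonneg ht0 (hε i).le), hsnorm s, mul_one]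
    calc t * ε i < 1 * ε i := mul_lt_mul_of_pos_right ht1 (hε i)
      _ = ε i := one_mul _
  -- the closed-cone parametrization into W'
  set g₀ : ((Σ _ : Fin r, ↥(Metric.sphere (0 : EuclideanSpace ℝ (Fin n)) 1)) ×
      {t : ℝ // t ∈ Set.Icc (0 : ℝ) 1}) → W' :=
    fun x => f (ψ x.1.1 ⟨c x.1.1 + ((x.2 : ℝ) * ε x.1.1) • (x.1.2 : EuclideanSpace ℝ (Fin n)),
      hmemVc _ _ (hmemball x.1.1 x.2 x.2.2.1 x.2.2.2 x.1.2)⟩) with hg₀def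
  have hg₀zero : ∀ (b : Σ _ : Fin r, ↥(Metric.sphere (0 : EuclideanSpace ℝ (Fin n)) 1))
      (t : {t : ℝ // t ∈ Set.Icc (0 : ℝ) 1}), (t : ℝ) = 0 → g₀ (b, t) = p' := by
    intro b t ht
    have harg : c b.1 + ((t : ℝ) * ε b.1) • (b.2 : EuclideanSpace ℝ (Fin n)) = c b.1 := by
      rw [ht, zero_mul, zero_smul, add_zero]
    have hkey := hψcongr b.1 ⟨c b.1 + ((t : ℝ) * ε b.1) • (b.2 : EuclideanSpace ℝ (Fin n)),
      hmemVc _ _ (hmemball b.1 t t.2.1 t.2.2 b.2)⟩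
      ⟨c b.1, hmemVc b.1 (c b.1) (Metric.mem_closedBall_self (hε b.1).le)⟩ harg
    simp only [hg₀def]
    rw [hkey, hψc, hpfib]
  -- continuity of g₀
  have hg₁cont : Continuous (fun y : Σ _ : Fin r,
      (↥(Metric.sphere (0 : EuclideanSpace ℝ (Fin n)) 1) × {t : ℝ // t ∈ Set.Icc (0 : ℝ) 1}) =>
      g₀ (⟨y.1, y.2.1⟩, y.2.2)) := by
    apply continuous_sigma
    intro i
    simp only [hg₀def, hψdef]
    have h1 : Continuous (fun a : ↥(Metric.sphere (0 : EuclideanSpace ℝ (Fin n)) 1) ×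
        {t : ℝ // t ∈ Set.Icc (0 : ℝ) 1} =>
        c i + ((a.2 : ℝ) * ε i) • (a.1 : EuclideanSpace ℝ (Fin n))) :=
      continuous_const.add
        (((continuous_subtype_val.comp continuous_snd).mul continuous_const).smul
          (continuous_subtype_val.comp continuous_fst))
    exact hf.comp (continuous_subtype_val.comp ((χ i).symm.continuous.comp (h1.subtype_mk _)))
  have hg₀cont : Continuous g₀ := by
    have heq : g₀ = (fun y : Σ _ : Fin r,
        (↥(Metric.sphere (0 : EuclideanSpace ℝ (Fin n)) 1) × {t : ℝ // t ∈ Set.Icc (0 : ℝ) 1}) =>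
        g₀ (⟨y.1, y.2.1⟩, y.2.2)) ∘ ⇑(Homeomorph.sigmaProdDistrib) := by
      funext x
      obtain ⟨⟨i, s⟩, t⟩ := x
      simp [Homeomorph.sigmaProdDistrib_apply]
    rw [heq]
    exact hg₁cont.comp (Homeomorph.continuous _)
  -- the closed cone map
  have hresp : ∀ (a b : (Σ _ : Fin r, ↥(Metric.sphere (0 : EuclideanSpace ℝ (Fin n)) 1)) ×
      {t : ℝ // t ∈ Set.Icc (0 : ℝ) 1}), (ConeSetoidC _).r a b → g₀ a = g₀ b := by
    rintro a b (rfl | ⟨h1, h2⟩)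
    · rfl
    · rw [hg₀zero a.1 a.2 h1, hg₀zero b.1 b.2 h2]
  -- the value is p' iff t = 0
  have hx_eq_c : ∀ (b : Σ _ : Fin r, ↥(Metric.sphere (0 : EuclideanSpace ℝ (Fin n)) 1))
      (t : {t : ℝ // t ∈ Set.Icc (0 : ℝ) 1}),
      c b.1 + ((t : ℝ) * ε b.1) • (b.2 : EuclideanSpace ℝ (Fin n)) = c b.1 → (t : ℝ) = 0 := by
    intro b t h
    have h0 : ((t : ℝ) * ε b.1) • (b.2 : EuclideanSpace ℝ (Fin n)) = 0 := by
      have := add_eq_left.1 h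
      exact this
    rcases smul_eq_zero.1 h0 with h1 | h2
    · rcases mul_eq_zero.1 h1 with h3 | h4
      · exact h3
      · exact absurd h4 (hε b.1).ne'
    · exact absurd (hsnorm b.2) (by rw [h2]; simp)
  have hg₀p' : ∀ (b : Σ _ : Fin r, ↥(Metric.sphere (0 : EuclideanSpace ℝ (Fin n)) 1))
      (t : {t : ℝ // t ∈ Set.Icc (0 : ℝ) 1}), g₀ (b, t) = p' → (t : ℝ) = 0 := by
    intro b t h
    have hxball : c b.1 + ((t : ℝ) * ε b.1) • (b.2 : EuclideanSpace ℝ (Fin n))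
        ∈ Metric.closedBall (c b.1) (ε b.1) := hmemball b.1 t t.2.1 t.2.2 b.2
    have hw : f (ψ b.1 ⟨c b.1 + ((t : ℝ) * ε b.1) • (b.2 : EuclideanSpace ℝ (Fin n)),
        hmemVc _ _ hxball⟩) = p' := h
    have hw' : ψ b.1 ⟨c b.1 + ((t : ℝ) * ε b.1) • (b.2 : EuclideanSpace ℝ (Fin n)),
        hmemVc _ _ hxball⟩ ∈ f ⁻¹' {p'} := by simp [Set.mem_preimage, hw]
    rw [hfiber] at hw'
    obtain ⟨j, hj⟩ := hw'
    have hwO : ψ b.1 ⟨c b.1 + ((t : ℝ) * ε b.1) • (b.2 : EuclideanSpace ℝ (Fin n)),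
        hmemVc _ _ hxball⟩ ∈ O b.1 := hψO b.1 _ hxball
    have hjb : j = b.1 := by
      by_contra hnej
      exact Set.disjoint_left.1 (hOdisj j b.1 hnej) (hj ▸ hpO j) hwO
    rw [hjb] at hj
    have hcmem : c b.1 ∈ Vc b.1 := hmemVc _ _ (Metric.mem_closedBall_self (hε b.1).le)
    have hcx : ψ b.1 ⟨c b.1, hcmem⟩ = ψ b.1 ⟨c b.1 + ((t : ℝ) * ε b.1) •
        (b.2 : EuclideanSpace ℝ (Fin n)), hmemVc _ _ hxball⟩ := by
      rw [hψc b.1 hcmem]; exact hj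
    have := congrArg Subtype.val (hψinj b.1 hcx)
    exact hx_eq_c b t this.symm
  -- injectivity at the level of representatives
  have hginjective : ∀ (a b : (Σ _ : Fin r, ↥(Metric.sphere (0 : EuclideanSpace ℝ (Fin n)) 1)) ×
      {t : ℝ // t ∈ Set.Icc (0 : ℝ) 1}), g₀ a = g₀ b → (ConeSetoidC _).r a b := by
    rintro ⟨⟨i, s⟩, t⟩ ⟨⟨j, s'⟩, t'⟩ h
    by_cases ht : (t : ℝ) = 0
    · have h1 : g₀ (⟨i, s⟩, t) = p' := hg₀zero _ _ ht
      exact Or.inr ⟨ht, hg₀p' ⟨j, s'⟩ t' (h.symm.trans h1)⟩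
    · have hne : g₀ (⟨i, s⟩, t) ≠ p' := fun hc => ht (hg₀p' _ _ hc)
      obtain ⟨w, hweq, hwu⟩ := hinj _ hne
      have hA : ψ i ⟨c i + ((t : ℝ) * ε i) • (s : EuclideanSpace ℝ (Fin n)),
          hmemVc _ _ (hmemball i t t.2.1 t.2.2 s)⟩ = w := hwu _ rfl
      have hB : ψ j ⟨c j + ((t' : ℝ) * ε j) • (s' : EuclideanSpace ℝ (Fin n)),
          hmemVc _ _ (hmemball j t' t'.2.1 t'.2.2 s')⟩ = w := hwu _ h.symm
      have e1 := hA.trans hB.symm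
      have hij : i = j := by
        by_contra hnij
        exact Set.disjoint_left.1 (hOdisj i j hnij)
          (hψO i _ (hmemball i t t.2.1 t.2.2 s))
          (e1.symm ▸ hψO j _ (hmemball j t' t'.2.1 t'.2.2 s'))
      subst hij
      have e2 : c i + ((t : ℝ) * ε i) • (s : EuclideanSpace ℝ (Fin n))
          = c i + ((t' : ℝ) * ε i) • (s' : EuclideanSpace ℝ (Fin n)) :=
        congrArg Subtype.val (hψinj i e1)
      have e3 := add_left_cancel e2
      have e4 : (t : ℝ) * ε i = (t' : ℝ) * ε i := by
        have := congrArg norm e3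
        rwa [norm_smul, norm_smul, hsnorm, hsnorm, mul_one, mul_one,
          Real.norm_of_nonneg (mul_nonneg t.2.1 (hε i).le),
          Real.norm_of_nonneg (mul_nonneg t'.2.1 (hε i).le)] at this
      have e5 : (t : ℝ) = (t' : ℝ) := mul_right_cancel₀ (hε i).ne' e4
      rw [← e4] at e3
      have e6 : (s : EuclideanSpace ℝ (Fin n)) = (s' : EuclideanSpace ℝ (Fin n)) :=
        smul_right_injective (EuclideanSpace ℝ (Fin n)) (mul_ne_zero ht (hε i).ne') e3
      obtain rfl : s = s' := Subtype.ext e6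
      obtain rfl : t = t' := Subtype.ext e5
      exact Or.inl rfl
  -- the closed cone map is a closed embedding
  set gbar : ConeC (Σ _ : Fin r, ↥(Metric.sphere (0 : EuclideanSpace ℝ (Fin n)) 1)) → W' :=
    Quotient.lift g₀ hresp with hgbardef
  have hgbarcont : Continuous gbar := hg₀cont.quotient_lift hresp
  haveI : CompactSpace {t : ℝ // t ∈ Set.Icc (0 : ℝ) 1} :=
    isCompact_iff_compactSpace.1 isCompact_Icc
  have hgbarinj : Function.Injective gbar := fun q1 q2 =>
    Quotient.inductionOn₂ q1 q2 (fun a b h => Quotient.sound (hginjective a b h))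
  have hgbaremb : Topology.IsClosedEmbedding gbar := hgbarcont.isClosedEmbedding hgbarinj
  -- the embedding of the open cone
  set h' : Cone (Σ _ : Fin r, ↥(Metric.sphere (0 : EuclideanSpace ℝ (Fin n)) 1)) → W' :=
    gbar ∘ coneIncl _ with hh'def
  have hh'emb : Topology.IsEmbedding h' :=
    hgbaremb.isEmbedding.comp (coneIncl_isEmbedding _)
  -- the open set downstairs
  set Bi : Fin r → Set W := fun i => (fun y : ↥(Vc i) => ψ i y) ''
    (Subtype.val ⁻¹' Metric.ball (c i) (ε i)) with hBidef
  have hBiopen : ∀ i, IsOpen (Bi i) := by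
    intro i
    have hmap : IsOpenMap (fun y : ↥(Vc i) => ψ i y) := by
      rw [hψdef]
      exact ((hUopen i).isOpenMap_subtype_val).comp (χ i).symm.isOpenMap
    exact hmap _ (Metric.isOpen_ball.preimage continuous_subtype_val)
  set Ub : Set W := ⋃ i, Bi i with hUbdef
  have hUbopen : IsOpen Ub := isOpen_iUnion hBiopen
  have hpUb : ∀ i, p i ∈ Ub := by
    intro i
    have hcmem : c i ∈ Vc i := hmemVc _ _ (Metric.mem_closedBall_self (hε i).le)
    exact Set.mem_iUnion.2 ⟨i, ⟨⟨c i, hcmem⟩, Metric.mem_ball_self (hε i), hψc i hcmem⟩⟩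
  have hpre : f ⁻¹' (f '' Ub) = Ub := by
    apply Set.Subset.antisymm _ (Set.subset_preimage_image f Ub)
    rintro w hw
    obtain ⟨u, hu, huw⟩ := hw
    by_cases hwp : f w = p'
    · have hwfib : w ∈ f ⁻¹' {p'} := by simp [Set.mem_preimage, hwp]
      rw [hfiber] at hwfib
      obtain ⟨j, rfl⟩ := hwfib
      exact hpUb j
    · obtain ⟨z, hz, hzu⟩ := hinj (f w) hwp
      have : u = w := (hzu u huw).trans (hzu w rfl).symm
      rwa [← this]
  have hqmf : Topology.IsQuotientMap f := (hf.isClosedMap).isQuotientMap hf hsurj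
  have hfUbopen : IsOpen (f '' Ub) := by
    rw [← hqmf.isOpen_preimage, hpre]; exact hUbopen
  -- the range of h' is f '' Ub
  have hrange : Set.range h' = f '' Ub := by
    apply Set.Subset.antisymm
    · rintro _ ⟨q, rfl⟩
      induction q using Quotient.ind with
      | _ a =>
        obtain ⟨⟨i, s⟩, t, ht0, ht1⟩ := a
        refine ⟨ψ i ⟨c i + (t * ε i) • (s : EuclideanSpace ℝ (Fin n)),
          hmemVc _ _ (hmemball i t ht0 ht1.le s)⟩, ?_, rfl⟩
        exact Set.mem_iUnion.2 ⟨i, ⟨⟨c i + (t * ε i) • (s : EuclideanSpace ℝ (Fin n)),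
          hmemVc _ _ (hmemball i t ht0 ht1.le s)⟩, hmemballlt i t ht0 ht1 s, rfl⟩⟩
    · rintro _ ⟨w, hw, rfl⟩
      obtain ⟨i, hi⟩ := Set.mem_iUnion.1 hw
      obtain ⟨y, hy, rfl⟩ := hi
      by_cases h0 : (y : EuclideanSpace ℝ (Fin n)) = c i
      · refine ⟨Quotient.mk (ConeSetoid _) (⟨i, ⟨s₀, hs₀⟩⟩, ⟨0, le_rfl, one_pos⟩), ?_⟩
        have hv : h' (Quotient.mk (ConeSetoid _) (⟨i, ⟨s₀, hs₀⟩⟩, ⟨0, le_rfl, one_pos⟩))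
            = p' := hg₀zero ⟨i, ⟨s₀, hs₀⟩⟩ ⟨0, le_rfl, zero_le_one⟩ rfl
        rw [hv]
        have hyc : y = (⟨c i, h0 ▸ y.2⟩ : ↥(Vc i)) := Subtype.ext h0
        rw [hyc]
        show p' = f (ψ i ⟨c i, h0 ▸ y.2⟩)
        rw [hψc i (h0 ▸ y.2)]
        exact (hpfib i).symm
      · have hd0 : (y : EuclideanSpace ℝ (Fin n)) - c i ≠ 0 := sub_ne_zero.2 h0
        have hdpos : 0 < ‖(y : EuclideanSpace ℝ (Fin n)) - c i‖ := norm_pos_iff.2 hd0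
        have hdlt : ‖(y : EuclideanSpace ℝ (Fin n)) - c i‖ < ε i := by
          have h1 : (y : EuclideanSpace ℝ (Fin n)) ∈ Metric.ball (c i) (ε i) := hy
          rw [Metric.mem_ball, dist_eq_norm] at h1
          exact h1
        have hsmem : ‖(y : EuclideanSpace ℝ (Fin n)) - c i‖⁻¹ •
            ((y : EuclideanSpace ℝ (Fin n)) - c i) ∈
            Metric.sphere (0 : EuclideanSpace ℝ (Fin n)) 1 := by
          rw [mem_sphere_zero_iff_norm, norm_smul, norm_inv, norm_norm,
            inv_mul_cancel₀ hdpos.ne']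
        refine ⟨Quotient.mk (ConeSetoid _) (⟨i, ⟨_, hsmem⟩⟩,
          ⟨‖(y : EuclideanSpace ℝ (Fin n)) - c i‖ / ε i, div_nonneg (norm_nonneg _) (hε i).le,
            (div_lt_one (hε i)).2 hdlt⟩), ?_⟩
        have harg : c i + ((‖(y : EuclideanSpace ℝ (Fin n)) - c i‖ / ε i) * ε i) •
            (‖(y : EuclideanSpace ℝ (Fin n)) - c i‖⁻¹ •
              ((y : EuclideanSpace ℝ (Fin n)) - c i)) = (y : EuclideanSpace ℝ (Fin n)) := by
          rw [div_mul_cancel₀ _ (hε i).ne', smul_smul, mul_inv_cancel₀ hdpos.ne', one_smul]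
          abel
        exact congrArg f (hψcongr i _ y harg)
  -- conclusion
  refine ⟨Set.range h', by rw [hrange]; exact hfUbopen, ?_, ?_⟩
  · exact ⟨Quotient.mk (ConeSetoid _) (⟨⟨0, hr⟩, ⟨s₀, hs₀⟩⟩, ⟨0, le_rfl, one_pos⟩),
      hg₀zero ⟨⟨0, hr⟩, ⟨s₀, hs₀⟩⟩ ⟨0, le_rfl, zero_le_one⟩ rfl⟩
  · refine ⟨hh'emb.toHomeomorph, ?_⟩
    intro b
    exact hg₀zero b ⟨0, le_rfl, zero_le_one⟩ rfl
end

section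
/- Let k be a field and g ≥ 0. For i = 1, …, g let A_i = !![λ_i, α_i; 0, λ_i⁻¹] and B_i = !![μ_i, β_i; 0, μ_i⁻¹] be upper-triangular matrices in SL₂(k), with λ_i, μ_i ∈ kˣ and α_i, β_i ∈ k. Then ∏_{i=1}^{g} [A_i, B_i] = !![1, S; 0, 1], where S = Σ_{i=1}^{g} ( μ_i β_i (λ_i² − 1) + λ_i α_i (1 − μ_i²) ). In particular, ∏_{i=1}^{g} [A_i, B_i] equals the identity matrix if and only if Σ_{i=1}^{g} ( μ_i β_i (λ_i² − 1) + λ_i α_i (1 − μ_i²) ) = 0; this is the defining equation of the tuples of upper-triangular matrices lying in the SL₂(k)-representation variety of a closed orientable surface of genus g. -/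
lemma tri_inv {k : Type*} [Field k] (l : kˣ) (a : k) :
    (!![(l : k), a; 0, ((l⁻¹ : kˣ) : k)])⁻¹ = !![((l⁻¹ : kˣ) : k), -a; 0, (l : k)] := by
  apply Matrix.inv_eq_right_inv
  ext i j
  fin_cases i <;> fin_cases j <;>
    · simp [Matrix.mul_apply, Fin.sum_univ_two]
      try ring

lemma commutator_eq {k : Type*} [Field k] (l m : kˣ) (a b : k) :
    (!![(l : k), a; 0, ((l⁻¹ : kˣ) : k)] * !![(m : k), b; 0, ((m⁻¹ : kˣ) : k)] *
      (!![(l : k), a; 0, ((l⁻¹ : kˣ) : k)])⁻¹ * (!![(m : k), b; 0, ((m⁻¹ : kˣ) : k)])⁻¹) =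
    !![1, (m : k) * b * ((l : k) ^ 2 - 1) + (l : k) * a * (1 - (m : k) ^ 2); 0, 1] := by
  rw [tri_inv, tri_inv]
  ext i j
  fin_cases i <;> fin_cases j <;>
    · simp [Matrix.mul_apply, Fin.sum_univ_two]
      try field_simp
      try ring

lemma shear_prod {k : Type*} [Field k] : ∀ (n : ℕ) (c : Fin n → k),
    (List.ofFn fun i => (!![1, c i; 0, 1] : Matrix (Fin 2) (Fin 2) k)).prod =
      !![1, ∑ i, c i; 0, 1] := by
  intro n
  induction n with
  | zero => intro c; simp [Matrix.one_fin_two]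
  | succ n ih =>
      intro c
      rw [List.ofFn_succ, List.prod_cons, ih, Fin.sum_univ_succ]
      ext i j
      fin_cases i <;> fin_cases j <;>
        · simp [Matrix.mul_apply, Fin.sum_univ_two]
          try ring

lemma shear_eq_one {k : Type*} [Field k] (s : k) :
    (!![1, s; 0, 1] : Matrix (Fin 2) (Fin 2) k) = 1 ↔ s = 0 := by
  constructor
  · intro h
    have := congrFun (congrFun h 0) 1
    simpa using this
  · rintro rfl; simp [Matrix.one_fin_two]

/-- The ordered product of commutators of upper-triangular matrices in `SL₂(k)`
`A_i = !![λ_i, α_i; 0, λ_i⁻¹]`, `B_i = !![μ_i, β_i; 0, μ_i⁻¹]` equals `!![1, S; 0, 1]` with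
`S = Σ_i ( μ_i β_i (λ_i² − 1) + λ_i α_i (1 − μ_i²) )`; in particular it is the identity matrix
if and only if `S = 0`. -/
theorem prod_commutators_upper_triangular (k : Type*) [Field k] (g : ℕ)
    (lam mu : Fin g → kˣ) (al be : Fin g → k) :
    (List.ofFn fun i : Fin g =>
        (!![(lam i : k), al i; 0, ((lam i)⁻¹ : kˣ)] * !![(mu i : k), be i; 0, ((mu i)⁻¹ : kˣ)] *
          (!![(lam i : k), al i; 0, ((lam i)⁻¹ : kˣ)])⁻¹ *
          (!![(mu i : k), be i; 0, ((mu i)⁻¹ : kˣ)])⁻¹ : Matrix (Fin 2) (Fin 2) k)).prod =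
      !![1, ∑ i : Fin g,
            ((mu i : k) * be i * ((lam i : k) ^ 2 - 1) + (lam i : k) * al i * (1 - (mu i : k) ^ 2));
         0, 1] ∧
    ((List.ofFn fun i : Fin g =>
        (!![(lam i : k), al i; 0, ((lam i)⁻¹ : kˣ)] * !![(mu i : k), be i; 0, ((mu i)⁻¹ : kˣ)] *
          (!![(lam i : k), al i; 0, ((lam i)⁻¹ : kˣ)])⁻¹ *
          (!![(mu i : k), be i; 0, ((mu i)⁻¹ : kˣ)])⁻¹ : Matrix (Fin 2) (Fin 2) k)).prod = 1 ↔
      ∑ i : Fin g,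
          ((mu i : k) * be i * ((lam i : k) ^ 2 - 1) + (lam i : k) * al i * (1 - (mu i : k) ^ 2))
        = 0) := by
  have h : (List.ofFn fun i : Fin g =>
        (!![(lam i : k), al i; 0, ((lam i)⁻¹ : kˣ)] * !![(mu i : k), be i; 0, ((mu i)⁻¹ : kˣ)] *
          (!![(lam i : k), al i; 0, ((lam i)⁻¹ : kˣ)])⁻¹ *
          (!![(mu i : k), be i; 0, ((mu i)⁻¹ : kˣ)])⁻¹ : Matrix (Fin 2) (Fin 2) k)).prod =
      !![1, ∑ i : Fin g,
            ((mu i : k) * be i * ((lam i : k) ^ 2 - 1) + (lam i : k) * al i * (1 - (mu i : k) ^ 2));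
         0, 1] := by
    simp only [commutator_eq]
    exact shear_prod g _
  exact ⟨h, by rw [h]; exact shear_eq_one _⟩
end

section
/- Let k be a field of characteristic different from 2, let g ≥ 0 and r ≥ 0, and let A₁, B₁, …, A_g, B_g ∈ SL₂(k) and P₁, …, P_r ∈ SL₂(k) with tr P_j = 2 for every j. If ∏_{i=1}^{g} [A_i, B_i] · ∏_{j=1}^{r} P_j = −I, then there is no nonzero vector v ∈ k² that is simultaneously an eigenvector of every A_i, every B_i and every P_j; that is, every representation in the parabolic representation variety with a puncture of holonomy −I and r punctures of trace-2 Jordan type is irreducible. -/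
section Aux
variable {k : Type*} [Field k]

/-- An eigenvalue of a 2×2 matrix satisfies the characteristic equation. -/
lemma eig_quad (M : Matrix (Fin 2) (Fin 2) k) (v : Fin 2 → k) (a : k)
    (hv : v ≠ 0) (h : M.mulVec v = a • v) :
    a ^ 2 - Matrix.trace M * a + M.det = 0 := by
  have h0 := congrFun h 0
  have h1 := congrFun h 1
  simp [Matrix.mulVec, dotProduct, Fin.sum_univ_two] at h0 h1
  rw [Matrix.trace_fin_two, Matrix.det_fin_two]
  have hv' : v 0 ≠ 0 ∨ v 1 ≠ 0 := by
    by_contra hc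
    push_neg at hc
    apply hv
    funext i
    fin_cases i
    · exact hc.1
    · exact hc.2
  rcases hv' with hi | hi
  · apply mul_left_cancel₀ hi
    linear_combination (M 1 1 - a) * h0 - M 0 1 * h1
  · apply mul_left_cancel₀ hi
    linear_combination (M 0 0 - a) * h1 - M 1 0 * h0

lemma sl2_inv_eig (M : Matrix.SpecialLinearGroup (Fin 2) k) (v : Fin 2 → k) (a : k)
    (hv : v ≠ 0) (h : (M : Matrix (Fin 2) (Fin 2) k).mulVec v = a • v) :
    a ≠ 0 ∧ ((M⁻¹ : Matrix.SpecialLinearGroup (Fin 2) k) : Matrix (Fin 2) (Fin 2) k).mulVec v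
      = a⁻¹ • v := by
  have key : a • ((M⁻¹ : Matrix.SpecialLinearGroup (Fin 2) k) :
      Matrix (Fin 2) (Fin 2) k).mulVec v = v := by
    rw [← Matrix.mulVec_smul, ← h, Matrix.mulVec_mulVec, ← Matrix.SpecialLinearGroup.coe_mul,
      inv_mul_cancel]
    simp [Matrix.mulVec_one]
  have ha : a ≠ 0 := by
    intro h0
    rw [h0, zero_smul] at key
    exact hv key.symm
  refine ⟨ha, ?_⟩
  calc ((M⁻¹ : Matrix.SpecialLinearGroup (Fin 2) k) : Matrix (Fin 2) (Fin 2) k).mulVec v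
      = a⁻¹ • (a • ((M⁻¹ : Matrix.SpecialLinearGroup (Fin 2) k) :
          Matrix (Fin 2) (Fin 2) k).mulVec v) := by
        rw [smul_smul, inv_mul_cancel₀ ha, one_smul]
    _ = a⁻¹ • v := by rw [key]

lemma prod_fix (v : Fin 2 → k) :
    ∀ L : List (Matrix.SpecialLinearGroup (Fin 2) k),
      (∀ M ∈ L, (M : Matrix (Fin 2) (Fin 2) k).mulVec v = v) →
      ((L.prod : Matrix.SpecialLinearGroup (Fin 2) k) : Matrix (Fin 2) (Fin 2) k).mulVec v = v
  | [], _ => by simp [Matrix.mulVec_one]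
  | M :: L, h => by
    have hM := h M List.mem_cons_self
    have hL := prod_fix v L (fun N hN => h N (List.mem_cons_of_mem _ hN))
    rw [List.prod_cons, Matrix.SpecialLinearGroup.coe_mul, ← Matrix.mulVec_mulVec, hL, hM]

end Aux

/-- In characteristic ≠ 2, if `∏ [A_i,B_i] · ∏ P_j = −I` in `SL₂(k)` with
`tr P_j = 2` for all `j`, then the matrices `A_i, B_i, P_j` have no common eigenvector; i.e.
every such representation is irreducible. -/
theorem no_common_eigenvector_of_rel_neg_id (k : Type*) [Field k] (hchar : ringChar k ≠ 2)
    (g r : ℕ) (A B : Fin g → Matrix.SpecialLinearGroup (Fin 2) k)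
    (P : Fin r → Matrix.SpecialLinearGroup (Fin 2) k)
    (hP : ∀ j, Matrix.trace (P j : Matrix (Fin 2) (Fin 2) k) = 2)
    (hrel : (((List.ofFn fun i : Fin g => A i * B i * (A i)⁻¹ * (B i)⁻¹).prod *
        (List.ofFn fun j : Fin r => P j).prod : Matrix.SpecialLinearGroup (Fin 2) k) :
          Matrix (Fin 2) (Fin 2) k) = -1) :
    ¬ ∃ v : Fin 2 → k, v ≠ 0 ∧
        (∀ i, ∃ a : k, Matrix.mulVec (A i : Matrix (Fin 2) (Fin 2) k) v = a • v) ∧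
        (∀ i, ∃ a : k, Matrix.mulVec (B i : Matrix (Fin 2) (Fin 2) k) v = a • v) ∧
        (∀ j, ∃ a : k, Matrix.mulVec (P j : Matrix (Fin 2) (Fin 2) k) v = a • v) := by
  rintro ⟨v, hv, hA, hB, hPv⟩
  -- each commutator fixes v
  have hcomm : ∀ M ∈ List.ofFn (fun i : Fin g => A i * B i * (A i)⁻¹ * (B i)⁻¹),
      (M : Matrix (Fin 2) (Fin 2) k).mulVec v = v := by
    intro M hM
    rw [List.mem_ofFn] at hM
    obtain ⟨i, rfl⟩ := hM
    obtain ⟨a, ha⟩ := hA i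
    obtain ⟨b, hb⟩ := hB i
    obtain ⟨ha0, hainv⟩ := sl2_inv_eig (A i) v a hv ha
    obtain ⟨hb0, hbinv⟩ := sl2_inv_eig (B i) v b hv hb
    show ((A i * B i * (A i)⁻¹ * (B i)⁻¹ :
        Matrix.SpecialLinearGroup (Fin 2) k) : Matrix (Fin 2) (Fin 2) k).mulVec v = v
    simp only [Matrix.SpecialLinearGroup.coe_mul, ← Matrix.mulVec_mulVec, hbinv,
      Matrix.mulVec_smul, hainv, hb, ha, smul_smul]
    match_scalars
    field_simp
  -- each P j fixes v
  have hPfix : ∀ M ∈ List.ofFn (fun j : Fin r => P j),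
      (M : Matrix (Fin 2) (Fin 2) k).mulVec v = v := by
    intro M hM
    rw [List.mem_ofFn] at hM
    obtain ⟨j, rfl⟩ := hM
    obtain ⟨a, ha⟩ := hPv j
    have hq := eig_quad ((P j : Matrix (Fin 2) (Fin 2) k)) v a hv ha
    rw [hP j, Matrix.SpecialLinearGroup.det_coe] at hq
    have hsq : (a - 1) ^ 2 = 0 := by linear_combination hq
    have ha1 : a = 1 := sub_eq_zero.mp ((pow_eq_zero_iff two_ne_zero).mp hsq)
    rw [ha, ha1, one_smul]
  have hfix := prod_fix v ((List.ofFn fun i : Fin g => A i * B i * (A i)⁻¹ * (B i)⁻¹) ++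
    (List.ofFn fun j : Fin r => P j)) (by
      intro M hM
      rcases List.mem_append.mp hM with h | h
      · exact hcomm M h
      · exact hPfix M h)
  rw [List.prod_append, hrel] at hfix
  have hneg : (-v : Fin 2 → k) = v := by
    have h1 : ((-1 : Matrix (Fin 2) (Fin 2) k)).mulVec v = -v := by
      simp [Matrix.neg_mulVec, Matrix.mulVec_one]
    rw [h1] at hfix; exact hfix
  have h2 : (2 : k) ≠ 0 := Ring.two_ne_zero hchar
  apply hv
  funext i
  have hvi : -v i = v i := congrFun hneg i
  have h2v : (2 : k) * v i = 0 := by linear_combination -hvi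
  simpa using (mul_eq_zero.mp h2v).resolve_left h2
end
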